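/- Let P and Q be probability measures on a measurable space X with P absolutely continuous with respect to Q, let p = dP/dQ be a Radon–Nikodym derivative, let π ∈ (0,1), and set η(x) = π p(x) / (π p(x) + 1 − π). Let L̄ : [0,1] → ℝ be a bounded measurable function (a pointwise Bayes risk). Then the statistical information L̄(π) − ∫_X L̄(η(x)) d(πP + (1−π)Q)(x) equals ∫_X f^π(p(x)) dQ(x), where f^π(t) = L̄(π) − (πt + 1 − π)·L̄(πt/(πt + 1 − π)). -/

import Mathlib

open MeasureTheory ENNReal NNReal

/-- Let `P` and `Q` be probability measures on `X` with `P ≪ Q` and density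
`p = dP/dQ`, let `π ∈ (0,1)`, and set `η(x) = π p(x)/(π p(x) + 1 - π)`. For a
bounded measurable pointwise Bayes risk `L` on `[0,1]`, the statistical
information `L(π) - ∫ L(η(x)) d(πP + (1-π)Q)` equals the f-divergence
`∫ f^π(p(x)) dQ`, where `f^π(t) = L(π) - (π t + 1 - π) L(π t/(π t + 1 - π))`. -/
theorem statistical_information_eq_f_divergence
    {X : Type*} [MeasurableSpace X] (P Q : Measure X)
    [IsProbabilityMeasure P] [IsProbabilityMeasure Q]
    (hPQ : P ≪ Q)
    (p : X → ℝ) (hp_meas : Measurable p) (hp_nonneg : ∀ x, 0 ≤ p x)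
    (hdens : P = Q.withDensity fun x => ENNReal.ofReal (p x))
    (π : ℝ) (hπ : π ∈ Set.Ioo (0 : ℝ) 1)
    (L : ℝ → ℝ) (hL_meas : Measurable L)
    (hL_bdd : ∃ M : ℝ, ∀ y ∈ Set.Icc (0 : ℝ) 1, |L y| ≤ M) :
    L π - ∫ x, L (π * p x / (π * p x + 1 - π))
        ∂(ENNReal.ofReal π • P + ENNReal.ofReal (1 - π) • Q) =
      ∫ x, (L π - (π * p x + 1 - π) * L (π * p x / (π * p x + 1 - π))) ∂Q := by
  obtain ⟨hπ0, hπ1⟩ := hπ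
  obtain ⟨M, hM⟩ := hL_bdd
  set g : X → ℝ := fun x => L (π * p x / (π * p x + 1 - π)) with hg_def
  have hden_pos : ∀ x, 0 < π * p x + 1 - π := fun x => by nlinarith [hp_nonneg x]
  have hη_mem : ∀ x, π * p x / (π * p x + 1 - π) ∈ Set.Icc (0 : ℝ) 1 := by
    intro x
    constructor
    · exact div_nonneg (mul_nonneg hπ0.le (hp_nonneg x)) (hden_pos x).le
    · rw [div_le_one (hden_pos x)]; linarith
  have hg_meas : Measurable g := by
    apply hL_meas.comp
    exact ((measurable_const.mul hp_meas).div
      (((measurable_const.mul hp_meas).add measurable_const).sub measurable_const))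
  have hg_bdd : ∀ x, |g x| ≤ M := fun x => hM _ (hη_mem x)
  have hg_intQ : Integrable g Q := by
    refine ⟨hg_meas.aestronglyMeasurable, ?_⟩
    apply HasFiniteIntegral.mono' (integrable_const M).hasFiniteIntegral
    exact Filter.Eventually.of_forall hg_bdd
  have hg_intP : Integrable g P := by
    refine ⟨hg_meas.aestronglyMeasurable, ?_⟩
    apply HasFiniteIntegral.mono' (integrable_const M).hasFiniteIntegral
    exact Filter.Eventually.of_forall hg_bdd
  have hp_int : Integrable p Q := by
    rw [← memLp_one_iff_integrable]
    refine ⟨hp_meas.aestronglyMeasurable, ?_⟩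
    have : ∫⁻ x, ENNReal.ofReal (p x) ∂Q = 1 := by
      have := (measure_univ (μ := P))
      rw [hdens, withDensity_apply _ MeasurableSet.univ] at this
      simpa using this
    simp only [eLpNorm_one_eq_lintegral_enorm, enorm_eq_nnnorm]
    have heq : ∀ x, (‖p x‖₊ : ℝ≥0∞) = ENNReal.ofReal (p x) := fun x => by
      rw [← enorm_eq_nnnorm, ← ofReal_norm, Real.norm_of_nonneg (hp_nonneg x)]
    simp only [heq, this]
    exact ENNReal.one_lt_top
  have hpg_int : Integrable (fun x => p x * g x) Q := by
    have := hp_int.bdd_mul hg_meas.aestronglyMeasurable (Filter.Eventually.of_forall fun x => by simpa using hg_bdd x)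
    simpa [mul_comm] using this
  -- ∫ g dP = ∫ p * g dQ
  have hP_eq : ∫ x, g x ∂P = ∫ x, p x * g x ∂Q := by
    rw [hdens]
    have hrfl : (fun x => ENNReal.ofReal (p x)) = fun x => ((p x).toNNReal : ℝ≥0∞) := rfl
    rw [hrfl, integral_withDensity_eq_integral_smul (f := fun x => (p x).toNNReal)
      hp_meas.real_toNNReal g]
    refine integral_congr_ae (Filter.Eventually.of_forall fun x => ?_)
    simp [NNReal.smul_def, Real.coe_toNNReal _ (hp_nonneg x)]
  have key : ∫ x, g x ∂(ENNReal.ofReal π • P + ENNReal.ofReal (1 - π) • Q)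
      = π * ∫ x, p x * g x ∂Q + (1 - π) * ∫ x, g x ∂Q := by
    rw [integral_add_measure, integral_smul_measure, integral_smul_measure,
      ENNReal.toReal_ofReal hπ0.le, ENNReal.toReal_ofReal (by linarith), hP_eq]
    · simp [smul_eq_mul]
    · exact (hg_intP.smul_measure (by simp)).congr (by rfl)
    · exact (hg_intQ.smul_measure (by simp)).congr (by rfl)
  have hexpand : ∀ x, L π - (π * p x + 1 - π) * g x
      = L π - (π * (p x * g x) + (1 - π) * g x) := fun x => by ring
  calc L π - ∫ x, g x ∂(ENNReal.ofReal π • P + ENNReal.ofReal (1 - π) • Q)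
      = L π - (π * ∫ x, p x * g x ∂Q + (1 - π) * ∫ x, g x ∂Q) := by rw [key]
    _ = ∫ x, (L π - (π * (p x * g x) + (1 - π) * g x)) ∂Q := by
        have hint : Integrable (fun x => π * (p x * g x) + (1 - π) * g x) Q :=
          (hpg_int.const_mul π).add (hg_intQ.const_mul (1 - π))
        rw [integral_sub (integrable_const _) hint]
        rw [integral_const]
        simp only [probReal_univ, measure_univ, ENNReal.toReal_one, smul_eq_mul, one_mul]
        rw [integral_add (hpg_int.const_mul π) (hg_intQ.const_mul (1 - π)),
          integral_const_mul, integral_const_mul]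
    _ = ∫ x, (L π - (π * p x + 1 - π) * g x) ∂Q := by
        congr 1; funext x; rw [hexpand x]
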